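/- Given a 3-SAT instance with variables x_1, ..., x_n and clauses C_1, ..., C_m, construct the labeled directed graph G as follows: labels are literals (variable-polarity pairs). Vertices are s = u_0, u_1, ..., u_n = w_0, w_1, ..., w_m = t. For each variable x_j there are two parallel paths from u_{j-1} to u_j, one whose edges are labeled with the positive literal x_j (repeated once per occurrence of x_j in clauses, or a single edge labeled x_j), and one labeled with the negative literal ¬x_j. For each clause C_i there are three parallel edges from w_{i-1} to w_i, labeled with the three literals of C_i. Then there exists a path from s to t in G with pairwise distinct edge labels if and only if the 3-SAT formula is satisfiable. -/

import Mathlib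

structure LabeledGraph (V E L : Type) where
  src : E → V
  tgt : E → V
  lab : E → L

variable {V E L : Type}

def IsWalk (G : LabeledGraph V E L) : V → V → List E → Prop
  | s, t, [] => s = t
  | s, t, e :: es => G.src e = s ∧ IsWalk G (G.tgt e) t es

def Feasible (G : LabeledGraph V E L) (p : List E) : Prop :=
  (p.map G.lab).Nodup

/-! ## The 3-SAT to SPUL reduction graph

A 3-SAT instance with `n` variables and `m` clauses is given by
`C : Fin m → Fin 3 → Fin n × Bool`, where `C i k = (j, b)` means the `k`-th
literal of clause `C_i` is variable `x_j` with polarity `b`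
(`b = true` : positive literal `x_j`; `b = false` : negated literal `¬x_j`). -/

/-- The list of occurrences (clause index, position) of the literal `(j, b)`. -/
def occList {n m : ℕ} (C : Fin m → Fin 3 → Fin n × Bool) (j : Fin n) (b : Bool) :
    List (Fin m × Fin 3) :=
  ((List.finRange m) ×ˢ (List.finRange 3)).filter (fun q => C q.1 q.2 = (j, b))

/-- Number of edges of the branch of the variable gadget for `x_j` carrying
polarity `b`: one edge per occurrence of the literal `(j, b)` in the clauses,
or a single (dummy-labeled) edge if the literal does not occur. -/
def branchLen {n m : ℕ} (C : Fin m → Fin 3 → Fin n × Bool) (j : Fin n) (b : Bool) : ℕ :=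
  max 1 (occList C j b).length

/-- Vertices of the reduction graph: the junction vertices
`s = u_0, u_1, …, u_n = w_0, w_1, …, w_m = t` (as `Fin (n+m+1)`, where `u_j` is
junction `j` and `w_i` is junction `n + i`), together with internal vertices of
the variable-gadget branches. -/
abbrev RedV {n m : ℕ} (C : Fin m → Fin 3 → Fin n × Bool) : Type :=
  Fin (n + m + 1) ⊕ (Σ j : Fin n, Σ b : Bool, Fin (branchLen C j b))

/-- Edges of the reduction graph: `inl ⟨j, b, r⟩` is the `r`-th edge of the
branch of variable gadget `x_j` with polarity `b`; `inr (i, k)` is the clause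
edge for the `k`-th literal of clause `C_i`. -/
abbrev RedE {n m : ℕ} (C : Fin m → Fin 3 → Fin n × Bool) : Type :=
  (Σ j : Fin n, Σ b : Bool, Fin (branchLen C j b)) ⊕ (Fin m × Fin 3)

/-- Labels: `inl (i, k)` identifies the occurrence of a literal at position `k`
of clause `C_i` (this label appears both on the corresponding variable-branch
edge and on the corresponding clause edge); `inr (j, b)` is the dummy label for
the branch of a literal occurring in no clause. -/
abbrev RedL (n m : ℕ) : Type := (Fin m × Fin 3) ⊕ (Fin n × Bool)

/-- The reduction graph: in series, for each variable `x_j` two parallel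
branches from `u_{j-1}` to `u_j` (the branch of polarity `b` being a directed
path whose edges carry the labels of the occurrences of literal `(j, b)`),
followed by, for each clause `C_i`, three parallel edges from `w_{i-1}` to
`w_i` labeled by the three literal occurrences of `C_i`. -/
def redGraph (n m : ℕ) (C : Fin m → Fin 3 → Fin n × Bool) :
    LabeledGraph (RedV C) (RedE C) (RedL n m) where
  src e :=
    match e with
    | Sum.inl ⟨j, b, r⟩ =>
        if r.val = 0 then Sum.inl ⟨j.val, by have := j.isLt; omega⟩
        else Sum.inr ⟨j, b, ⟨r.val - 1, by have := r.isLt; omega⟩⟩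
    | Sum.inr (i, _) => Sum.inl ⟨n + i.val, by have := i.isLt; omega⟩
  tgt e :=
    match e with
    | Sum.inl ⟨j, b, r⟩ =>
        if r.val = branchLen C j b - 1 then Sum.inl ⟨j.val + 1, by have := j.isLt; omega⟩
        else Sum.inr ⟨j, b, r⟩
    | Sum.inr (i, _) => Sum.inl ⟨n + i.val + 1, by have := i.isLt; omega⟩
  lab e :=
    match e with
    | Sum.inl ⟨j, b, r⟩ =>
        if h : occList C j b = [] then Sum.inr (j, b)
        else Sum.inl ((occList C j b).getD r.val ((occList C j b).head h))
    | Sum.inr q => Sum.inl q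

/-- Start vertex `s = u_0`. -/
def redS (n m : ℕ) (C : Fin m → Fin 3 → Fin n × Bool) : RedV C :=
  Sum.inl ⟨0, by omega⟩

/-- Target vertex `t = w_m`. -/
def redT (n m : ℕ) (C : Fin m → Fin 3 → Fin n × Bool) : RedV C :=
  Sum.inl ⟨n + m, by omega⟩

/-! ### Generic walk lemmas -/

section generic
variable {V E L : Type} (G : LabeledGraph V E L)

lemma isWalk_append {a b c : V} : ∀ {p q : List E},
    IsWalk G a b p → IsWalk G b c q → IsWalk G a c (p ++ q) := by
  intro p
  induction p generalizing a with
  | nil => intro q h1 h2; cases h1; simpa using h2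
  | cons e es ih =>
      intro q h1 h2
      obtain ⟨h1a, h1b⟩ := h1
      exact ⟨h1a, ih h1b h2⟩

lemma isWalk_prev {v t : V} : ∀ {p : List E}, IsWalk G v t p →
    ∀ f ∈ p, G.src f = v ∨ ∃ e ∈ p, G.tgt e = G.src f := by
  intro p
  induction p generalizing v with
  | nil => intro _ f hf; simp at hf
  | cons e es ih =>
      intro h f hf
      obtain ⟨h1, h2⟩ := h
      rcases List.mem_cons.mp hf with rfl | hf'
      · left; exact h1
      · rcases ih h2 f hf' with h3 | ⟨e', he', h4⟩
        · right; exact ⟨e, List.mem_cons_self, h3.symm ▸ rfl⟩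
        · right; exact ⟨e', List.mem_cons_of_mem _ he', h4⟩

lemma isWalk_next {v t : V} : ∀ {p : List E}, IsWalk G v t p →
    ∀ f ∈ p, G.tgt f = t ∨ ∃ e ∈ p, G.src e = G.tgt f := by
  intro p
  induction p generalizing v with
  | nil => intro _ f hf; simp at hf
  | cons e es ih =>
      intro h f hf
      obtain ⟨h1, h2⟩ := h
      rcases List.mem_cons.mp hf with rfl | hf'
      · cases es with
        | nil => left; exact h2
        | cons e' es' => right; exact ⟨e', by simp, h2.1⟩
      · rcases ih h2 f hf' with h3 | ⟨e', he', h4⟩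
        · left; exact h3
        · right; exact ⟨e', List.mem_cons_of_mem _ he', h4⟩

/-- Concatenation of a family of lists. -/
def catl (P : ℕ → List E) : ℕ → List E
  | 0 => []
  | c + 1 => catl P c ++ P c

lemma mem_catl {P : ℕ → List E} {x : E} : ∀ {c : ℕ}, x ∈ catl P c ↔ ∃ a < c, x ∈ P a := by
  intro c
  induction c with
  | zero => simp [catl]
  | succ c ih =>
      simp only [catl, List.mem_append, ih]
      constructor
      · rintro (⟨a, ha, hx⟩ | hx)
        · exact ⟨a, by omega, hx⟩
        · exact ⟨c, by omega, hx⟩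
      · rintro ⟨a, ha, hx⟩
        rcases Nat.lt_succ_iff_lt_or_eq.mp ha with h | rfl
        · exact Or.inl ⟨a, h, hx⟩
        · exact Or.inr hx

lemma catl_isWalk {g : ℕ → V} {P : ℕ → List E} :
    ∀ c : ℕ, (∀ a < c, IsWalk G (g a) (g (a+1)) (P a)) →
      IsWalk G (g 0) (g c) (catl P c) := by
  intro c
  induction c with
  | zero => intro _; exact rfl
  | succ c ih =>
      intro h
      exact isWalk_append G (ih (fun a ha => h a (by omega))) (h c (by omega))

lemma map_catl {α : Type} (f : E → α) (P : ℕ → List E) :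
    ∀ c : ℕ, (catl P c).map f = catl (fun a => (P a).map f) c := by
  intro c
  induction c with
  | zero => rfl
  | succ c ih => simp [catl, ih]

lemma nodup_catl {α : Type} {P : ℕ → List α} {c : ℕ}
    (h1 : ∀ a < c, (P a).Nodup)
    (h2 : ∀ a < c, ∀ a' < c, a ≠ a' → ∀ x ∈ P a, x ∉ P a') :
    (catl P c).Nodup := by
  induction c with
  | zero => simp [catl]
  | succ c ih =>
      refine List.Nodup.append (ih (fun a ha => h1 a (by omega))
        (fun a ha a' ha' => h2 a (by omega) a' (by omega))) (h1 c (by omega)) ?_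
      intro x hx hx'
      obtain ⟨a, ha, hxa⟩ := (mem_catl (E := α)).mp hx
      exact h2 a (by omega) c (by omega) (by omega) x hxa hx'

end generic
/-! ### Computation lemmas for the reduction graph -/

section red
variable {n m : ℕ} {C : Fin m → Fin 3 → Fin n × Bool}

lemma red_src_inr (i : Fin m) (k : Fin 3) :
    (redGraph n m C).src (Sum.inr (i, k)) = Sum.inl ⟨n + i.val, by have := i.isLt; omega⟩ := rfl

lemma red_tgt_inr (i : Fin m) (k : Fin 3) :
    (redGraph n m C).tgt (Sum.inr (i, k)) = Sum.inl ⟨n + i.val + 1, by have := i.isLt; omega⟩ := rfl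

lemma red_lab_inr (q : Fin m × Fin 3) :
    (redGraph n m C).lab (Sum.inr q) = Sum.inl q := rfl

lemma red_src_inl (j : Fin n) (b : Bool) (r : Fin (branchLen C j b)) :
    (redGraph n m C).src (Sum.inl ⟨j, b, r⟩) =
      if r.val = 0 then Sum.inl ⟨j.val, by have := j.isLt; omega⟩
      else Sum.inr ⟨j, b, ⟨r.val - 1, by have := r.isLt; omega⟩⟩ := rfl

lemma red_tgt_inl (j : Fin n) (b : Bool) (r : Fin (branchLen C j b)) :
    (redGraph n m C).tgt (Sum.inl ⟨j, b, r⟩) =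
      if r.val = branchLen C j b - 1 then Sum.inl ⟨j.val + 1, by have := j.isLt; omega⟩
      else Sum.inr ⟨j, b, r⟩ := rfl

lemma red_lab_inl (j : Fin n) (b : Bool) (r : Fin (branchLen C j b)) :
    (redGraph n m C).lab (Sum.inl ⟨j, b, r⟩) =
      if h : occList C j b = [] then Sum.inr (j, b)
      else Sum.inl ((occList C j b).getD r.val ((occList C j b).head h)) := rfl

lemma branchLen_pos (j : Fin n) (b : Bool) : 0 < branchLen C j b := by
  simp [branchLen]

lemma mem_occList {q : Fin m × Fin 3} {j : Fin n} {b : Bool} :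
    q ∈ occList C j b ↔ C q.1 q.2 = (j, b) := by
  constructor
  · intro h
    exact of_decide_eq_true (List.mem_filter.mp h).2
  · intro h
    refine List.mem_filter.mpr ⟨?_, decide_eq_true h⟩
    exact List.mem_product.mpr ⟨List.mem_finRange _, List.mem_finRange _⟩

lemma occList_nodup (j : Fin n) (b : Bool) : (occList C j b).Nodup :=
  List.Nodup.filter _ (List.Nodup.product (List.nodup_finRange m) (List.nodup_finRange 3))

lemma branchLen_eq {j : Fin n} {b : Bool} (h : occList C j b ≠ []) :
    branchLen C j b = (occList C j b).length := by
  have : 0 < (occList C j b).length := List.length_pos_iff.mpr h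
  simp [branchLen]; omega

/-- Helper: equality of branch sigma triples. -/
lemma sigma_triple_eq {j j' : Fin n} {b b' : Bool} {r : Fin (branchLen C j b)}
    {r' : Fin (branchLen C j' b')} :
    (⟨j', b', r'⟩ : Σ j : Fin n, Σ b : Bool, Fin (branchLen C j b)) = ⟨j, b, r⟩ ↔
      j' = j ∧ b' = b ∧ r'.val = r.val := by
  constructor
  · intro h
    have h1 := congrArg (fun x : (Σ j : Fin n, Σ b : Bool, Fin (branchLen C j b)) =>
      (x.1, x.2.1, x.2.2.val)) h
    simpa using h1
  · rintro ⟨rfl, rfl, h⟩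
    have : r' = r := Fin.ext h
    rw [this]

end red
/-! ### The constructed walk for a satisfying assignment -/

section construct
variable {n m : ℕ} {C : Fin m → Fin 3 → Fin n × Bool}

/-- The edges of the branch of variable `j` with polarity `b`, in order. -/
def branchEdges (C : Fin m → Fin 3 → Fin n × Bool) (j : Fin n) (b : Bool) : List (RedE C) :=
  (List.finRange (branchLen C j b)).map (fun r => Sum.inl ⟨j, b, r⟩)

/-- Intermediate vertex along a branch. -/
def bVtx (C : Fin m → Fin 3 → Fin n × Bool) (j : Fin n) (b : Bool) (r : ℕ) : RedV C :=
  if r = 0 then Sum.inl ⟨j.val, by have := j.isLt; omega⟩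
  else if h : r < branchLen C j b then Sum.inr ⟨j, b, ⟨r - 1, by omega⟩⟩
  else Sum.inl ⟨j.val + 1, by have := j.isLt; omega⟩

lemma branchEdges_isWalk (j : Fin n) (b : Bool) :
    IsWalk (redGraph n m C) (Sum.inl ⟨j.val, by have := j.isLt; omega⟩)
      (Sum.inl ⟨j.val + 1, by have := j.isLt; omega⟩) (branchEdges C j b) := by
  have key : ∀ d r, r + d = branchLen C j b →
      IsWalk (redGraph n m C) (bVtx C j b r)
        (Sum.inl ⟨j.val + 1, by have := j.isLt; omega⟩)
        (((List.finRange (branchLen C j b)).drop r).map (fun r => Sum.inl ⟨j, b, r⟩)) := by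
    intro d
    induction d with
    | zero =>
        intro r hr
        have h1 : (List.finRange (branchLen C j b)).drop r = [] := by
          apply List.drop_eq_nil_of_le; simp; omega
        rw [h1]
        have hpos := branchLen_pos (C := C) j b
        simp only [List.map_nil]
        show bVtx C j b r = _
        unfold bVtx
        rw [if_neg (by omega), dif_neg (by omega)]
    | succ d ih =>
        intro r hr
        have hrlt : r < branchLen C j b := by omega
        rw [List.drop_eq_getElem_cons (show r < (List.finRange (branchLen C j b)).length by
          simpa using hrlt)]
        simp only [List.map_cons, List.getElem_finRange, Fin.cast_mk]
        refine ⟨?_, ?_⟩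
        · rw [red_src_inl]
          unfold bVtx
          by_cases h0 : r = 0
          · rw [if_pos (show ((⟨r, hrlt⟩ : Fin (branchLen C j b)).val = 0) from h0),
              if_pos h0]
          · rw [if_neg (show ¬((⟨r, hrlt⟩ : Fin (branchLen C j b)).val = 0) from h0),
              if_neg h0, dif_pos hrlt]
        · have h2 : (redGraph n m C).tgt (Sum.inl ⟨j, b, ⟨r, hrlt⟩⟩) = bVtx C j b (r + 1) := by
            rw [red_tgt_inl]
            unfold bVtx
            by_cases hend : r = branchLen C j b - 1
            · rw [if_pos (show ((⟨r, hrlt⟩ : Fin (branchLen C j b)).val = branchLen C j b - 1) from hend),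
                if_neg (show ¬(r + 1 = 0) by omega), dif_neg (by omega)]
            · rw [if_neg (show ¬((⟨r, hrlt⟩ : Fin (branchLen C j b)).val = branchLen C j b - 1) from hend),
                if_neg (show ¬(r + 1 = 0) by omega), dif_pos (by omega)]
              rw [Sum.inr.injEq, sigma_triple_eq]
              exact ⟨rfl, rfl, rfl⟩
          rw [h2]
          exact ih (r + 1) (by omega)
  have h0 := key (branchLen C j b) 0 (by omega)
  simpa [bVtx, branchEdges] using h0

/-- Labels of the branch: either the dummy label, or the occurrence list. -/
lemma branchEdges_labels (j : Fin n) (b : Bool) {x : RedL n m}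
    (hx : x ∈ (branchEdges C j b).map (redGraph n m C).lab) :
    x = Sum.inr (j, b) ∨ ∃ q, x = Sum.inl q ∧ C q.1 q.2 = (j, b) := by
  simp only [branchEdges, List.map_map, List.mem_map, Function.comp] at hx
  obtain ⟨r, -, rfl⟩ := hx
  rw [red_lab_inl]
  by_cases h : occList C j b = []
  · rw [dif_pos h]; left; rfl
  · rw [dif_neg h]
    right
    have hlen : r.val < (occList C j b).length := by
      have := branchLen_eq (C := C) h; have := r.isLt; omega
    rw [List.getD_eq_getElem _ _ hlen]
    refine ⟨_, rfl, ?_⟩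
    exact mem_occList.mp (List.getElem_mem hlen)

lemma branchEdges_labels_nodup (j : Fin n) (b : Bool) :
    ((branchEdges C j b).map (redGraph n m C).lab).Nodup := by
  simp only [branchEdges, List.map_map]
  refine List.Nodup.map_on ?_ (List.nodup_finRange _)
  intro x hx y hy hxy
  simp only [Function.comp, red_lab_inl] at hxy
  by_cases h : occList C j b = []
  · rw [dif_pos h, dif_pos h] at hxy
    have hlen : branchLen C j b = 1 := by simp [branchLen, h]
    have hx1 := x.isLt; have hy1 := y.isLt
    apply Fin.ext; omega
  · rw [dif_neg h, dif_neg h] at hxy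
    have hlx : x.val < (occList C j b).length := by
      have := branchLen_eq (C := C) h; have := x.isLt; omega
    have hly : y.val < (occList C j b).length := by
      have := branchLen_eq (C := C) h; have := y.isLt; omega
    rw [List.getD_eq_getElem _ _ hlx, List.getD_eq_getElem _ _ hly] at hxy
    have := Sum.inl.inj hxy
    apply Fin.ext
    exact (List.Nodup.getElem_inj_iff (occList_nodup j b)).mp this

end construct
section backward
variable {n m : ℕ} {C : Fin m → Fin 3 → Fin n × Bool}

/-- Junction vertex, as a total function of `ℕ`. -/
def juncV (n m : ℕ) (C : Fin m → Fin 3 → Fin n × Bool) (a : ℕ) : RedV C :=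
  Sum.inl ⟨min a (n + m), by omega⟩

lemma juncV_eq {a : ℕ} (h : a ≤ n + m) : juncV n m C a = Sum.inl ⟨a, by omega⟩ := by
  unfold juncV
  congr 1
  exact Fin.ext (by simp; omega)

/-- The pieces of the constructed walk. -/
def pieceQ (C : Fin m → Fin 3 → Fin n × Bool) (σ : Fin n → Bool) (k : Fin m → Fin 3)
    (a : ℕ) : List (RedE C) :=
  if ha : a < n then branchEdges C ⟨a, ha⟩ (!σ ⟨a, ha⟩)
  else if ha2 : a - n < m then [Sum.inr (⟨a - n, ha2⟩, k ⟨a - n, ha2⟩)]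
  else []

lemma satisfiable_imp_walk (σ : Fin n → Bool)
    (h : ∀ i : Fin m, ∃ k : Fin 3, σ (C i k).1 = (C i k).2) :
    ∃ p : List (RedE C),
      IsWalk (redGraph n m C) (redS n m C) (redT n m C) p ∧
      Feasible (redGraph n m C) p := by
  classical
  choose k hk using h
  refine ⟨catl (pieceQ C σ k) (n + m), ?_, ?_⟩
  · have hw : IsWalk (redGraph n m C) (juncV n m C 0) (juncV n m C (n + m))
        (catl (pieceQ C σ k) (n + m)) := by
      apply catl_isWalk
      intro a ha
      rw [juncV_eq (by omega), juncV_eq (by omega)]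
      unfold pieceQ
      by_cases han : a < n
      · rw [dif_pos han]
        exact branchEdges_isWalk (C := C) ⟨a, han⟩ (!σ ⟨a, han⟩)
      · have ham : a - n < m := by omega
        rw [dif_neg han, dif_pos ham]
        refine ⟨?_, ?_⟩
        · rw [red_src_inr]
          congr 1
          exact Fin.ext (by simp; omega)
        · show (redGraph n m C).tgt _ = _
          rw [red_tgt_inr]
          congr 1
          exact Fin.ext (by simp; omega)
    rw [juncV_eq (by omega), juncV_eq (by omega)] at hw
    exact hw
  · show ((catl (pieceQ C σ k) (n + m)).map (redGraph n m C).lab).Nodup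
    rw [map_catl]
    set L := fun a => (pieceQ C σ k a).map (redGraph n m C).lab with hL
    -- a signature function recovering the piece index from a label
    set sig : RedL n m → ℕ := fun x =>
      match x with
      | Sum.inr (j, _) => j.val
      | Sum.inl q => if (C q.1 q.2).2 = σ (C q.1 q.2).1 then n + q.1.val
                     else (C q.1 q.2).1.val with hsigdef
    have hsig : ∀ a, a < n + m → ∀ x ∈ L a, sig x = a := by
      intro a ha x hx
      rw [hL] at hx
      simp only [pieceQ] at hx
      by_cases han : a < n
      · rw [dif_pos han] at hx
        rcases branchEdges_labels _ _ hx with rfl | ⟨q, rfl, hq⟩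
        · rfl
        · rw [hsigdef]
          simp only
          rw [hq]
          simp
      · have ham : a - n < m := by omega
        rw [dif_neg han, dif_pos ham] at hx
        simp only [List.map_cons, List.map_nil, red_lab_inr, List.mem_singleton] at hx
        subst hx
        rw [hsigdef]
        simp only
        rw [if_pos (hk _).symm]
        have : (⟨a - n, ham⟩ : Fin m).val = a - n := rfl
        omega
    apply nodup_catl
    · intro a ha
      simp only [hL, pieceQ]
      by_cases han : a < n
      · rw [dif_pos han]
        exact branchEdges_labels_nodup _ _
      · have ham : a - n < m := by omega
        rw [dif_neg han, dif_pos ham]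
        simp
    · intro a ha a' ha' hne x hx hx'
      have h1 := hsig a ha x hx
      have h2 := hsig a' ha' x hx'
      omega

end backward
section forward
variable {n m : ℕ} {C : Fin m → Fin 3 → Fin n × Bool}

lemma reach : ∀ (p : List (RedE C)) (v : RedV C),
    IsWalk (redGraph n m C) v (redT n m C) p →
    ∀ (a : ℕ) (_ : a < n + m),
    (∀ u : Fin (n + m + 1), v = Sum.inl u → u.val ≤ a) →
    (∀ s : (Σ j : Fin n, Σ b : Bool, Fin (branchLen C j b)), v = Sum.inr s → s.1.val < a) →
    ∃ e ∈ p, (redGraph n m C).src e = Sum.inl ⟨a, by omega⟩ := by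
  intro p
  induction p with
  | nil =>
      intro v hw a ha hv1 hv2
      have h3 : n + m ≤ a := hv1 ⟨n + m, by omega⟩ hw
      omega
  | cons e es ih =>
      intro v hw a ha hv1 hv2
      obtain ⟨h1, h2⟩ := hw
      obtain (⟨j, b, r⟩ | ⟨i, k⟩) := e
      · rw [red_src_inl] at h1
        have key : j.val < a →
            ∃ e ∈ Sum.inl ⟨j, b, r⟩ :: es,
              (redGraph n m C).src e = Sum.inl ⟨a, by omega⟩ := by
          intro hlt
          obtain ⟨e', he', hs⟩ := ih _ h2 a ha
            (by intro u hu
                rw [red_tgt_inl] at hu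
                by_cases hend : r.val = branchLen C j b - 1
                · rw [if_pos hend] at hu
                  have h3 : j.val + 1 = u.val := congrArg Fin.val (Sum.inl.inj hu)
                  omega
                · rw [if_neg hend] at hu
                  exact absurd hu (by simp))
            (by intro s hsx
                rw [red_tgt_inl] at hsx
                by_cases hend : r.val = branchLen C j b - 1
                · rw [if_pos hend] at hsx
                  exact absurd hsx (by simp)
                · rw [if_neg hend] at hsx
                  obtain rfl := Sum.inr.inj hsx
                  exact hlt)
          exact ⟨e', List.mem_cons_of_mem _ he', hs⟩
        by_cases hr0 : r.val = 0
        · rw [if_pos hr0] at h1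
          have hle : j.val ≤ a := hv1 _ h1.symm
          by_cases heq : j.val = a
          · refine ⟨Sum.inl ⟨j, b, r⟩, List.mem_cons_self, ?_⟩
            rw [red_src_inl, if_pos hr0]
            exact congrArg Sum.inl (Fin.ext heq)
          · exact key (by omega)
        · rw [if_neg hr0] at h1
          have hlt : j.val < a := hv2 _ h1.symm
          exact key hlt
      · rw [red_src_inr] at h1
        have hle : n + i.val ≤ a := hv1 _ h1.symm
        by_cases heq : n + i.val = a
        · refine ⟨Sum.inr (i, k), List.mem_cons_self, ?_⟩
          rw [red_src_inr]
          exact congrArg Sum.inl (Fin.ext heq)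
        · obtain ⟨e', he', hs⟩ := ih _ h2 a ha
            (by intro u hu
                rw [red_tgt_inr] at hu
                have h3 : n + i.val + 1 = u.val := congrArg Fin.val (Sum.inl.inj hu)
                omega)
            (by intro s hsx
                rw [red_tgt_inr] at hsx
                exact absurd hsx (by simp))
          exact ⟨e', List.mem_cons_of_mem _ he', hs⟩

variable {p : List (RedE C)}

lemma getClauseEdge (hw : IsWalk (redGraph n m C) (redS n m C) (redT n m C) p)
    (i : Fin m) : ∃ k : Fin 3, Sum.inr (i, k) ∈ p := by
  obtain ⟨e, he, hs⟩ := reach p _ hw (n + i.val) (by have := i.isLt; omega)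
    (by intro u hu
        have h3 : (0 : ℕ) = u.val := congrArg Fin.val (Sum.inl.inj hu)
        omega)
    (by intro s hsx; exact absurd hsx (by simp [redS]))
  obtain (⟨j, b, r⟩ | ⟨i', k⟩) := e
  · rw [red_src_inl] at hs
    by_cases hr0 : r.val = 0
    · rw [if_pos hr0] at hs
      have h3 : j.val = n + i.val := congrArg Fin.val (Sum.inl.inj hs)
      have hj := j.isLt
      omega
    · rw [if_neg hr0] at hs
      exact absurd hs (by simp)
  · rw [red_src_inr] at hs
    have h3 : n + i'.val = n + i.val := congrArg Fin.val (Sum.inl.inj hs)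
    have : i' = i := Fin.ext (by omega)
    subst this
    exact ⟨k, he⟩

lemma getBranchEdge (hw : IsWalk (redGraph n m C) (redS n m C) (redT n m C) p)
    (j : Fin n) : ∃ b : Bool, Sum.inl ⟨j, b, ⟨0, branchLen_pos j b⟩⟩ ∈ p := by
  obtain ⟨e, he, hs⟩ := reach p _ hw j.val (by have := j.isLt; omega)
    (by intro u hu
        have h3 : (0 : ℕ) = u.val := congrArg Fin.val (Sum.inl.inj hu)
        omega)
    (by intro s hsx; exact absurd hsx (by simp [redS]))
  obtain (⟨j', b, r⟩ | ⟨i', k⟩) := e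
  · rw [red_src_inl] at hs
    by_cases hr0 : r.val = 0
    · rw [if_pos hr0] at hs
      have h3 := congrArg Fin.val (Sum.inl.inj hs)
      have hjj : j' = j := Fin.ext (show j'.val = j.val from h3)
      subst hjj
      have hr : r = ⟨0, branchLen_pos j' b⟩ := Fin.ext hr0
      subst hr
      exact ⟨b, he⟩
    · rw [if_neg hr0] at hs
      exact absurd hs (by simp)
  · rw [red_src_inr] at hs
    have h3 : n + i'.val = j.val := congrArg Fin.val (Sum.inl.inj hs)
    have hj := j.isLt
    omega

lemma up_step (hw : IsWalk (redGraph n m C) (redS n m C) (redT n m C) p)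
    {j : Fin n} {b : Bool} {r : Fin (branchLen C j b)}
    (hmem : Sum.inl ⟨j, b, r⟩ ∈ p) (hlt : r.val + 1 < branchLen C j b) :
    Sum.inl ⟨j, b, (⟨r.val + 1, hlt⟩ : Fin (branchLen C j b))⟩ ∈ p := by
  have hne : ¬ r.val = branchLen C j b - 1 := by omega
  have htgt : (redGraph n m C).tgt (Sum.inl ⟨j, b, r⟩) = Sum.inr ⟨j, b, r⟩ := by
    rw [red_tgt_inl, if_neg hne]
  rcases isWalk_next _ hw _ hmem with hEnd | ⟨e, he, hs⟩
  · rw [htgt] at hEnd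
    exact absurd hEnd (by simp [redT])
  · rw [htgt] at hs
    obtain (⟨j', b', r'⟩ | ⟨i', k'⟩) := e
    · rw [red_src_inl] at hs
      by_cases hr0 : r'.val = 0
      · rw [if_pos hr0] at hs
        exact absurd hs (by simp)
      · rw [if_neg hr0] at hs
        obtain ⟨rfl, rfl, hval⟩ := sigma_triple_eq.mp (Sum.inr.inj hs)
        have h4 : r'.val - 1 = r.val := hval
        have heq : (⟨j', b', r'⟩ : Σ j : Fin n, Σ b : Bool, Fin (branchLen C j b)) =
            ⟨j', b', ⟨r.val + 1, hlt⟩⟩ :=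
          sigma_triple_eq.mpr ⟨rfl, rfl, show r'.val = r.val + 1 by omega⟩
        rw [heq] at he
        exact he
    · rw [red_src_inr] at hs
      exact absurd hs (by simp)

lemma down_step (hw : IsWalk (redGraph n m C) (redS n m C) (redT n m C) p)
    {j : Fin n} {b : Bool} {r : Fin (branchLen C j b)}
    (hmem : Sum.inl ⟨j, b, r⟩ ∈ p) (h0 : ¬ r.val = 0) :
    Sum.inl ⟨j, b, (⟨r.val - 1, by have := r.isLt; omega⟩ : Fin (branchLen C j b))⟩ ∈ p := by
  have hsrc : (redGraph n m C).src (Sum.inl ⟨j, b, r⟩) =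
      Sum.inr ⟨j, b, ⟨r.val - 1, by have := r.isLt; omega⟩⟩ := by
    rw [red_src_inl, if_neg h0]
  rcases isWalk_prev _ hw _ hmem with hStart | ⟨e, he, hs⟩
  · rw [hsrc] at hStart
    exact absurd hStart (by simp [redS])
  · rw [hsrc] at hs
    obtain (⟨j', b', r'⟩ | ⟨i', k'⟩) := e
    · rw [red_tgt_inl] at hs
      by_cases hend : r'.val = branchLen C j' b' - 1
      · rw [if_pos hend] at hs
        exact absurd hs (by simp)
      · rw [if_neg hend] at hs
        obtain ⟨rfl, rfl, hval⟩ := sigma_triple_eq.mp (Sum.inr.inj hs)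
        have heq : (⟨j', b', r'⟩ : Σ j : Fin n, Σ b : Bool, Fin (branchLen C j b)) =
            ⟨j', b', ⟨r.val - 1, by have := r.isLt; omega⟩⟩ :=
          sigma_triple_eq.mpr ⟨rfl, rfl, hval⟩
        rw [heq] at he
        exact he
    · rw [red_tgt_inr] at hs
      exact absurd hs (by simp)

lemma spread (hw : IsWalk (redGraph n m C) (redS n m C) (redT n m C) p)
    {j : Fin n} {b : Bool} {r0 : Fin (branchLen C j b)}
    (hmem : Sum.inl ⟨j, b, r0⟩ ∈ p) (r : Fin (branchLen C j b)) :
    Sum.inl ⟨j, b, r⟩ ∈ p := by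
  have hpos := branchLen_pos (C := C) j b
  have zero_mem : Sum.inl ⟨j, b, (⟨0, hpos⟩ : Fin (branchLen C j b))⟩ ∈ p := by
    have key : ∀ c (r' : Fin (branchLen C j b)), r'.val ≤ c →
        Sum.inl ⟨j, b, r'⟩ ∈ p →
        Sum.inl ⟨j, b, (⟨0, hpos⟩ : Fin (branchLen C j b))⟩ ∈ p := by
      intro c
      induction c with
      | zero =>
          intro r' hr' hm
          have : r' = ⟨0, hpos⟩ := Fin.ext (show r'.val = 0 by omega)
          rwa [this] at hm
      | succ c ih =>
          intro r' hr' hm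
          by_cases h0 : r'.val = 0
          · have : r' = ⟨0, hpos⟩ := Fin.ext (show r'.val = 0 from h0)
            rwa [this] at hm
          · have hd := down_step hw hm h0
            exact ih _ (show r'.val - 1 ≤ c by omega) hd
    exact key r0.val r0 le_rfl hmem
  have key2 : ∀ c (hc : c < branchLen C j b),
      Sum.inl ⟨j, b, (⟨c, hc⟩ : Fin (branchLen C j b))⟩ ∈ p := by
    intro c
    induction c with
    | zero => intro hc; exact zero_mem
    | succ c ih =>
        intro hc
        exact up_step hw (ih (by omega)) hc
  have : r = ⟨r.val, r.isLt⟩ := Fin.ext rfl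
  rw [this]
  exact key2 r.val r.isLt

end forward
/-- There is an `s`-`t` path with pairwise distinct edge labels in the reduction
graph if and only if the 3-SAT instance is satisfiable. -/
theorem redGraph_feasible_path_iff_satisfiable (n m : ℕ)
    (C : Fin m → Fin 3 → Fin n × Bool) :
    (∃ p : List (RedE C),
        IsWalk (redGraph n m C) (redS n m C) (redT n m C) p ∧
        Feasible (redGraph n m C) p) ↔
    (∃ σ : Fin n → Bool, ∀ i : Fin m, ∃ k : Fin 3, σ (C i k).1 = (C i k).2) := by
  constructor
  · rintro ⟨p, hw, hf⟩
    classical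
    have hf' : (p.map (redGraph n m C).lab).Nodup := hf
    refine ⟨fun j => @ite Bool (∃ r : Fin (branchLen C j false), Sum.inl ⟨j, false, r⟩ ∈ p)
      (Classical.propDecidable _) true false, ?_⟩
    intro i
    obtain ⟨k, hek⟩ := getClauseEdge hw i
    refine ⟨k, ?_⟩
    rcases hC : C i k with ⟨j, b⟩
    show (@ite Bool (∃ r : Fin (branchLen C j false), Sum.inl ⟨j, false, r⟩ ∈ p)
      (Classical.propDecidable _) true false) = b
    have hno : ∀ r : Fin (branchLen C j b), Sum.inl ⟨j, b, r⟩ ∉ p := by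
      intro r hr
      have hocc : (i, k) ∈ occList C j b := mem_occList.mpr hC
      have hne2 : occList C j b ≠ [] := List.ne_nil_of_mem hocc
      obtain ⟨idx, hidx, hgy⟩ := List.mem_iff_getElem.mp hocc
      have hlen := branchLen_eq (C := C) hne2
      have hidx' : idx < branchLen C j b := by omega
      have hmem2 := spread hw hr ⟨idx, hidx'⟩
      have hgd : (occList C j b).getD
          ((⟨idx, hidx'⟩ : Fin (branchLen C j b)).val)
          ((occList C j b).head hne2) = (i, k) := by
        rw [List.getD_eq_getElem _ _
          (show ((⟨idx, hidx'⟩ : Fin (branchLen C j b)).val) < (occList C j b).length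
            from hidx)]
        exact hgy
      have hlab1 : (redGraph n m C).lab
          (Sum.inl ⟨j, b, ⟨idx, hidx'⟩⟩) = Sum.inl (i, k) := by
        rw [red_lab_inl, dif_neg hne2]
        exact congrArg Sum.inl hgd
      have hlab2 : (redGraph n m C).lab (Sum.inr (i, k)) = Sum.inl (i, k) :=
        red_lab_inr _
      have hEq := List.inj_on_of_nodup_map hf' hmem2 hek (hlab1.trans hlab2.symm)
      exact absurd hEq (by simp)
    obtain ⟨b0, hb0⟩ := getBranchEdge hw j
    have hb0ne : b0 ≠ b := by rintro rfl; exact hno _ hb0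
    cases b with
    | false =>
        rw [if_neg (show ¬ (∃ r : Fin (branchLen C j false), Sum.inl ⟨j, false, r⟩ ∈ p)
          from fun hex => hno hex.choose hex.choose_spec)]
    | true =>
        have hb0f : b0 = false := by
          cases b0
          · rfl
          · exact absurd rfl hb0ne
        subst hb0f
        rw [if_pos ⟨_, hb0⟩]
  · rintro ⟨σ, hσ⟩
    exact satisfiable_imp_walk σ hσ
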